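/- Let (X, μ) be a measure space, q₁ < q < q₂ finite exponents in [1, ∞), and F : X → [0, ∞) measurable. Suppose F ≤ G + H pointwise where ∫ G^{q₁} dμ ≤ C₁^{q₁} · 2^{N q₁ (1/q₁ - 1/q)} and ∫ H^{q₂} dμ ≤ C₂^{q₂} · 2^{-N q₂ (1/q - 1/q₂)} for every N ∈ ℤ (with G, H allowed to depend on N). Then F belongs to weak L^q, i.e., sup_{λ>0} λ · μ{F > λ}^{1/q} ≤ C for a constant C depending only on C₁, C₂, q, q₁, q₂. -/

import Mathlib

open MeasureTheory ENNReal

/-- Abstract Chebyshev-plus-optimization step: if for every `N ∈ ℤ` one can split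
`F ≤ G + H` with `∫ G^{q₁} ≤ C₁^{q₁} 2^{N q₁ (1/q₁ - 1/q)}` and
`∫ H^{q₂} ≤ C₂^{q₂} 2^{-N q₂ (1/q - 1/q₂)}`, then `F` lies in weak `L^q`, with a
constant depending only on `C₁, C₂, q, q₁, q₂`. -/
theorem weak_Lq_from_dyadic_splitting (q₁ q q₂ : ℝ) (hq₁ : 1 ≤ q₁) (h₁ : q₁ < q)
    (h₂ : q < q₂) (C₁ C₂ : ℝ≥0∞) (hC₁ : C₁ ≠ ∞) (hC₂ : C₂ ≠ ∞) :
    ∃ C : ℝ≥0∞, C ≠ ∞ ∧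
      ∀ (X : Type) (_ : MeasurableSpace X) (μ : Measure X) (F : X → ℝ≥0∞),
        Measurable F →
        (∀ N : ℤ, ∃ G H : X → ℝ≥0∞, Measurable G ∧ Measurable H ∧
          (∀ x, F x ≤ G x + H x) ∧
          (∫⁻ x, (G x) ^ q₁ ∂μ) ≤ C₁ ^ q₁ * (2 : ℝ≥0∞) ^ ((N : ℝ) * q₁ * (1/q₁ - 1/q)) ∧
          (∫⁻ x, (H x) ^ q₂ ∂μ) ≤ C₂ ^ q₂ * (2 : ℝ≥0∞) ^ (-(N : ℝ) * q₂ * (1/q - 1/q₂))) →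
        ∀ lam : ℝ≥0∞, 0 < lam →
          lam * (μ {x | lam < F x}) ^ (1/q) ≤ C := by
  have hq₁0 : (0:ℝ) < q₁ := by linarith
  have hq0 : (0:ℝ) < q := by linarith
  have hq₂0 : (0:ℝ) < q₂ := by linarith
  -- the constant
  set K : ℝ≥0∞ := (2:ℝ≥0∞) ^ q₁ * C₁ ^ q₁
      + (2:ℝ≥0∞) ^ q₂ * ((2:ℝ≥0∞) ^ (q₂/q - 1) * C₂ ^ q₂) with hK
  have h2top : (2:ℝ≥0∞) ≠ ∞ := by norm_num
  have hKtop : K ≠ ∞ := by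
    apply ENNReal.add_ne_top.2
    constructor
    · exact ENNReal.mul_ne_top (ENNReal.rpow_lt_top_of_nonneg hq₁0.le h2top).ne
        (ENNReal.rpow_lt_top_of_nonneg hq₁0.le hC₁).ne
    · refine ENNReal.mul_ne_top (ENNReal.rpow_lt_top_of_nonneg hq₂0.le h2top).ne
        (ENNReal.mul_ne_top
          (ENNReal.rpow_lt_top_of_nonneg ?_ h2top).ne
          (ENNReal.rpow_lt_top_of_nonneg hq₂0.le hC₂).ne)
      rw [sub_nonneg, le_div_iff₀ hq0]
      linarith
  refine ⟨K ^ (1/q), (ENNReal.rpow_lt_top_of_nonneg (by positivity) hKtop).ne, ?_⟩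
  intro X mX μ F hF hsplit lam hlam
  rcases eq_or_ne lam ∞ with rfl | hlamtop
  · have : {x | (∞:ℝ≥0∞) < F x} = ∅ := by
      ext x; simp [not_top_lt]
    rw [this, measure_empty, ENNReal.zero_rpow_of_pos (by positivity : (0:ℝ) < 1/q), mul_zero]
    exact zero_le
  -- main case : lam finite
  set r : ℝ := lam.toReal with hr
  have hr0 : 0 < r := ENNReal.toReal_pos hlam.ne' hlamtop
  have hlam0 : lam ≠ 0 := hlam.ne'
  have hlamr : lam = ENNReal.ofReal r := (ENNReal.ofReal_toReal hlamtop).symm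
  set N : ℤ := ⌊-q * Real.logb 2 r⌋ with hN
  obtain ⟨G, H, hG, hH, hFGH, hIG, hIH⟩ := hsplit N
  -- translate the powers of two
  have h2r : ∀ s : ℝ, (2:ℝ≥0∞) ^ (Real.logb 2 r * s) = lam ^ s := by
    intro s
    have : (2:ℝ≥0∞) = ENNReal.ofReal 2 := by norm_num
    rw [this, ENNReal.ofReal_rpow_of_pos (by norm_num),
      Real.rpow_mul (by norm_num), Real.rpow_logb (by norm_num) (by norm_num) hr0,
      ← ENNReal.ofReal_rpow_of_pos hr0, ← hlamr]
  have hpow1 : (2:ℝ≥0∞) ^ ((N : ℝ) * q₁ * (1/q₁ - 1/q)) ≤ lam ^ (q₁ - q) := by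
    rw [← h2r (q₁ - q)]
    apply ENNReal.rpow_le_rpow_of_exponent_le one_le_two
    have hNle : (N : ℝ) ≤ -q * Real.logb 2 r := Int.floor_le _
    have hfac : (0:ℝ) ≤ q₁ * (1/q₁ - 1/q) := by
      apply mul_nonneg hq₁0.le
      rw [sub_nonneg]
      exact one_div_le_one_div_of_le hq₁0 h₁.le
    calc (N : ℝ) * q₁ * (1/q₁ - 1/q) = (N : ℝ) * (q₁ * (1/q₁ - 1/q)) := by ring
      _ ≤ (-q * Real.logb 2 r) * (q₁ * (1/q₁ - 1/q)) := mul_le_mul_of_nonneg_right hNle hfac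
      _ = Real.logb 2 r * (q₁ - q) := by field_simp; ring
  have hpow2 : (2:ℝ≥0∞) ^ (-(N : ℝ) * q₂ * (1/q - 1/q₂))
      ≤ (2:ℝ≥0∞) ^ (q₂/q - 1) * lam ^ (q₂ - q) := by
    have step : (2:ℝ≥0∞) ^ (-(N : ℝ) * q₂ * (1/q - 1/q₂))
        ≤ (2:ℝ≥0∞) ^ ((q₂/q - 1) + Real.logb 2 r * (q₂ - q)) := by
      apply ENNReal.rpow_le_rpow_of_exponent_le one_le_two
      have hNge : -(N : ℝ) ≤ q * Real.logb 2 r + 1 := by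
        have := Int.sub_one_lt_floor (-q * Real.logb 2 r)
        rw [← hN] at this
        linarith
      have hfac : (0:ℝ) ≤ q₂ * (1/q - 1/q₂) := by
        apply mul_nonneg hq₂0.le
        rw [sub_nonneg]
        exact one_div_le_one_div_of_le hq0 h₂.le
      calc -(N : ℝ) * q₂ * (1/q - 1/q₂) = -(N : ℝ) * (q₂ * (1/q - 1/q₂)) := by ring
        _ ≤ (q * Real.logb 2 r + 1) * (q₂ * (1/q - 1/q₂)) :=
            mul_le_mul_of_nonneg_right hNge hfac
        _ = (q₂/q - 1) + Real.logb 2 r * (q₂ - q) := by field_simp; ring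
    rw [ENNReal.rpow_add _ _ (by norm_num) h2top, h2r] at step
    exact step
  -- Chebyshev for each piece
  have cheb : ∀ (f : X → ℝ≥0∞), Measurable f → ∀ p : ℝ, 0 < p →
      (lam/2) ^ p * μ {x | lam/2 ≤ f x} ≤ ∫⁻ x, (f x) ^ p ∂μ := by
    intro f hf p hp
    have hset : {x | lam/2 ≤ f x} = {x | (lam/2) ^ p ≤ (f x) ^ p} := by
      ext x
      simp only [Set.mem_setOf_eq]
      exact (ENNReal.rpow_le_rpow_iff hp).symm
    rw [hset]
    exact mul_meas_ge_le_lintegral (hf.pow measurable_const) _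
  -- combine and bound lam^q * μ{lam < F}
  have hsub : {x | lam < F x} ⊆ {x | lam/2 ≤ G x} ∪ {x | lam/2 ≤ H x} := by
    intro x hx
    by_contra hcon
    simp only [Set.mem_union, Set.mem_setOf_eq, not_or, not_le] at hcon
    have : F x < lam := by
      calc F x ≤ G x + H x := hFGH x
        _ < lam/2 + lam/2 := ENNReal.add_lt_add hcon.1 hcon.2
        _ = lam := ENNReal.add_halves lam
    exact absurd hx (not_lt.2 this.le)
  have hmeas : μ {x | lam < F x} ≤ μ {x | lam/2 ≤ G x} + μ {x | lam/2 ≤ H x} :=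
    le_trans (measure_mono hsub) (measure_union_le _ _)
  -- key multiplicative identity
  have keymul : ∀ p : ℝ, 0 < p →
      lam ^ (q - p) * ((2:ℝ≥0∞) ^ p * (lam/2) ^ p) = lam ^ q := by
    intro p hp
    rw [ENNReal.div_rpow_of_nonneg _ _ hp.le,
      ENNReal.mul_div_cancel (ENNReal.rpow_pos (by norm_num) h2top).ne'
        (ENNReal.rpow_lt_top_of_nonneg hp.le h2top).ne,
      ← ENNReal.rpow_add _ _ hlam0 hlamtop, sub_add_cancel]
  have claimG : lam ^ q * μ {x | lam/2 ≤ G x} ≤ (2:ℝ≥0∞) ^ q₁ * C₁ ^ q₁ := by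
    have h1 : (lam/2) ^ q₁ * μ {x | lam/2 ≤ G x} ≤ C₁ ^ q₁ * lam ^ (q₁ - q) :=
      le_trans (cheb G hG q₁ hq₁0) (le_trans hIG (mul_le_mul_right hpow1 _))
    calc lam ^ q * μ {x | lam/2 ≤ G x}
        = lam ^ (q - q₁) * (2:ℝ≥0∞) ^ q₁ * ((lam/2) ^ q₁ * μ {x | lam/2 ≤ G x}) := by
          rw [← keymul q₁ hq₁0]; ring
      _ ≤ lam ^ (q - q₁) * (2:ℝ≥0∞) ^ q₁ * (C₁ ^ q₁ * lam ^ (q₁ - q)) :=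
          mul_le_mul_right h1 _
      _ = (2:ℝ≥0∞) ^ q₁ * C₁ ^ q₁ * (lam ^ (q - q₁) * lam ^ (q₁ - q)) := by ring
      _ = (2:ℝ≥0∞) ^ q₁ * C₁ ^ q₁ := by
          rw [← ENNReal.rpow_add _ _ hlam0 hlamtop]
          simp
  have claimH : lam ^ q * μ {x | lam/2 ≤ H x}
      ≤ (2:ℝ≥0∞) ^ q₂ * ((2:ℝ≥0∞) ^ (q₂/q - 1) * C₂ ^ q₂) := by
    have h1 : (lam/2) ^ q₂ * μ {x | lam/2 ≤ H x}
        ≤ C₂ ^ q₂ * ((2:ℝ≥0∞) ^ (q₂/q - 1) * lam ^ (q₂ - q)) :=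
      le_trans (cheb H hH q₂ hq₂0) (le_trans hIH (mul_le_mul_right hpow2 _))
    calc lam ^ q * μ {x | lam/2 ≤ H x}
        = lam ^ (q - q₂) * (2:ℝ≥0∞) ^ q₂ * ((lam/2) ^ q₂ * μ {x | lam/2 ≤ H x}) := by
          rw [← keymul q₂ hq₂0]; ring
      _ ≤ lam ^ (q - q₂) * (2:ℝ≥0∞) ^ q₂ * (C₂ ^ q₂ * ((2:ℝ≥0∞) ^ (q₂/q - 1) * lam ^ (q₂ - q))) :=
          mul_le_mul_right h1 _
      _ = (2:ℝ≥0∞) ^ q₂ * ((2:ℝ≥0∞) ^ (q₂/q - 1) * C₂ ^ q₂) * (lam ^ (q - q₂) * lam ^ (q₂ - q)) := by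
          ring
      _ = (2:ℝ≥0∞) ^ q₂ * ((2:ℝ≥0∞) ^ (q₂/q - 1) * C₂ ^ q₂) := by
          rw [← ENNReal.rpow_add _ _ hlam0 hlamtop]
          simp
  have main : lam ^ q * μ {x | lam < F x} ≤ K := by
    calc lam ^ q * μ {x | lam < F x}
        ≤ lam ^ q * (μ {x | lam/2 ≤ G x} + μ {x | lam/2 ≤ H x}) := mul_le_mul_right hmeas _
      _ = lam ^ q * μ {x | lam/2 ≤ G x} + lam ^ q * μ {x | lam/2 ≤ H x} := mul_add _ _ _
      _ ≤ K := add_le_add claimG claimH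
  -- conclude
  have : lam * (μ {x | lam < F x}) ^ (1/q) = (lam ^ q * μ {x | lam < F x}) ^ (1/q) := by
    rw [ENNReal.mul_rpow_of_nonneg _ _ (by positivity : (0:ℝ) ≤ 1/q),
      ← ENNReal.rpow_mul, mul_one_div_cancel hq0.ne', ENNReal.rpow_one]
  rw [this]
  exact ENNReal.rpow_le_rpow main (by positivity)
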